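/- Let H be a real Hilbert space, 𝔖 a nonempty set of states with chosen points s_1, …, s_M ∈ 𝔖, 𝔄 a nonempty action set, φ : 𝔖 × 𝔄 → H a feature map, ψ_1, …, ψ_M ∈ H, g ∈ H, and α ≥ 0. For a policy μ : 𝔖 → 𝔄 define T_μ : H → H by T_μ(Q) = g + α · Σ_{i=1}^M ⟨φ(s_i, μ(s_i)), Q⟩ · ψ_i. Let K_Ψ be the M×M Gram matrix with entries ⟨ψ_i, ψ_j⟩, and for each policy μ′ : 𝔖 → 𝔄 let K^{av}_{μ′} be the M×M Gram matrix with entries ⟨φ(s_i, μ′(s_i)), φ(s_j, μ′(s_j))⟩. Suppose B ∈ ℝ satisfies ‖K^{av}_{μ′}‖₂ ≤ B for every policy μ′, where ‖·‖₂ is the matrix spectral norm, and set β := α·√(‖K_Ψ‖₂ · B). Then for all Q₁, Q₂ ∈ H, ‖T_μ(Q₁) − T_μ(Q₂)‖ ≤ β·‖Q₁ − Q₂‖. -/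

import Mathlib

open scoped RealInnerProductSpace

noncomputable def spectralNorm' {M : ℕ} (K : Matrix (Fin M) (Fin M) ℝ) : ℝ :=
  ‖Matrix.toEuclideanCLM (𝕜 := ℝ) K‖

lemma gram_quad_le {H : Type*} [NormedAddCommGroup H] [InnerProductSpace ℝ H]
    {M : ℕ} (h : Fin M → H) (K : Matrix (Fin M) (Fin M) ℝ)
    (hK : ∀ i j, K i j = ⟪h i, h j⟫) (c : Fin M → ℝ) :
    ‖∑ i, c i • h i‖ ^ 2 ≤ spectralNorm' K * ∑ i, c i ^ 2 := by
  set x : EuclideanSpace ℝ (Fin M) := (WithLp.equiv 2 _).symm c with hxdef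
  have hx2 : ‖x‖ ^ 2 = ∑ i, c i ^ 2 := by
    rw [EuclideanSpace.real_norm_sq_eq]; rfl
  have hmv : ∀ i, Matrix.toLin' K c i = ∑ j, K i j * c j := fun i => by
    rw [Matrix.toLin'_apply]; rfl
  have h1 : ‖∑ i, c i • h i‖ ^ 2 = ⟪x, Matrix.toEuclideanCLM (𝕜 := ℝ) K x⟫ := by
    rw [← real_inner_self_eq_norm_sq, hxdef, WithLp.equiv_symm_apply, Matrix.toEuclideanCLM_toLp,
      ← Matrix.toLin'_apply]
    simp only [PiLp.inner_apply, RCLike.inner_apply, starRingEnd_apply, star_trivial,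
      PiLp.toLp_apply, sum_inner, inner_sum,
      real_inner_smul_left, real_inner_smul_right]
    refine Finset.sum_congr rfl fun i _ => ?_
    rw [hmv, Finset.sum_mul]
    apply Finset.sum_congr rfl
    intro j _
    rw [hK, real_inner_comm]
    ring
  rw [h1, ← hx2]
  calc ⟪x, Matrix.toEuclideanCLM (𝕜 := ℝ) K x⟫
      ≤ ‖x‖ * ‖Matrix.toEuclideanCLM (𝕜 := ℝ) K x‖ := real_inner_le_norm _ _
    _ ≤ ‖x‖ * (spectralNorm' K * ‖x‖) := by
        gcongr; exact (Matrix.toEuclideanCLM (𝕜 := ℝ) K).le_opNorm x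
    _ = spectralNorm' K * ‖x‖ ^ 2 := by ring

theorem stmt0
    {H : Type*} [NormedAddCommGroup H] [InnerProductSpace ℝ H]
    {𝔖 𝔄 : Type*} [Nonempty 𝔖] [Nonempty 𝔄]
    {M : ℕ} (s : Fin M → 𝔖) (φ : 𝔖 × 𝔄 → H) (ψ : Fin M → H)
    (g : H) (α : ℝ) (hα : 0 ≤ α)
    (μ : 𝔖 → 𝔄)
    (T : H → H)
    (hT : ∀ Q : H, T Q = g + α • ∑ i, ⟪φ (s i, μ (s i)), Q⟫ • ψ i)
    (KΨ : Matrix (Fin M) (Fin M) ℝ)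
    (hKΨ : ∀ i j, KΨ i j = ⟪ψ i, ψ j⟫)
    (Kav : (𝔖 → 𝔄) → Matrix (Fin M) (Fin M) ℝ)
    (hKav : ∀ (μ' : 𝔖 → 𝔄) i j,
      Kav μ' i j = ⟪φ (s i, μ' (s i)), φ (s j, μ' (s j))⟫)
    (B : ℝ) (hB : ∀ μ' : 𝔖 → 𝔄, spectralNorm' (Kav μ') ≤ B)
    (β : ℝ) (hβ : β = α * Real.sqrt (spectralNorm' KΨ * B)) :
    ∀ Q₁ Q₂ : H, ‖T Q₁ - T Q₂‖ ≤ β * ‖Q₁ - Q₂‖ := by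
  intro Q₁ Q₂
  set Q := Q₁ - Q₂ with hQ
  set c : Fin M → ℝ := fun i => ⟪φ (s i, μ (s i)), Q⟫ with hc
  set S : ℝ := ∑ i, c i ^ 2 with hS
  have hS0 : 0 ≤ S := Finset.sum_nonneg fun i _ => sq_nonneg _
  have hB0 : 0 ≤ B := le_trans (norm_nonneg _) (hB μ)
  have hKΨ0 : (0:ℝ) ≤ spectralNorm' KΨ := norm_nonneg _
  have hdiff : T Q₁ - T Q₂ = α • ∑ i, c i • ψ i := by
    rw [hT, hT]
    have hsplit : ∀ i, c i • ψ i
        = ⟪φ (s i, μ (s i)), Q₁⟫ • ψ i - ⟪φ (s i, μ (s i)), Q₂⟫ • ψ i := by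
      intro i
      rw [hc]
      simp only [hQ, inner_sub_right, sub_smul]
    simp only [hsplit, Finset.sum_sub_distrib, smul_sub]
    abel
  have hSB : S ≤ B * ‖Q‖ ^ 2 := by
    have h1 : S = ⟪∑ i, c i • φ (s i, μ (s i)), Q⟫ := by
      rw [hS, sum_inner]
      exact Finset.sum_congr rfl fun i _ => by rw [real_inner_smul_left, hc, sq]
    have h2 : ‖∑ i, c i • φ (s i, μ (s i))‖ ^ 2 ≤ B * S := by
      calc ‖∑ i, c i • φ (s i, μ (s i))‖ ^ 2
          ≤ spectralNorm' (Kav μ) * S := gram_quad_le _ _ (hKav μ) c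
        _ ≤ B * S := by gcongr; exact hB μ
    have h3 : S ≤ Real.sqrt (B * S) * ‖Q‖ := by
      calc S = ⟪∑ i, c i • φ (s i, μ (s i)), Q⟫ := h1
        _ ≤ ‖∑ i, c i • φ (s i, μ (s i))‖ * ‖Q‖ := real_inner_le_norm _ _
        _ ≤ Real.sqrt (B * S) * ‖Q‖ := by
            gcongr
            exact Real.le_sqrt_of_sq_le h2
    rcases hS0.eq_or_lt with hz | hpos
    · rw [← hz]; positivity
    · have hr : Real.sqrt (B * S) ^ 2 = B * S := Real.sq_sqrt (by positivity)
      nlinarith [Real.sqrt_nonneg (B * S), norm_nonneg Q, sq_nonneg (Real.sqrt (B * S) * ‖Q‖)]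
  have hsum : ‖∑ i, c i • ψ i‖ ≤ Real.sqrt (spectralNorm' KΨ * B) * ‖Q‖ := by
    have h4 : ‖∑ i, c i • ψ i‖ ^ 2 ≤ spectralNorm' KΨ * B * ‖Q‖ ^ 2 := by
      calc ‖∑ i, c i • ψ i‖ ^ 2 ≤ spectralNorm' KΨ * S := gram_quad_le _ _ hKΨ c
        _ ≤ spectralNorm' KΨ * (B * ‖Q‖ ^ 2) := by gcongr
        _ = spectralNorm' KΨ * B * ‖Q‖ ^ 2 := by ring
    calc ‖∑ i, c i • ψ i‖ ≤ Real.sqrt (spectralNorm' KΨ * B * ‖Q‖ ^ 2) :=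
          Real.le_sqrt_of_sq_le h4
      _ = Real.sqrt (spectralNorm' KΨ * B) * ‖Q‖ := by
          rw [Real.sqrt_mul (by positivity), Real.sqrt_sq (norm_nonneg _)]
  calc ‖T Q₁ - T Q₂‖ = α * ‖∑ i, c i • ψ i‖ := by
        rw [hdiff, norm_smul, Real.norm_eq_abs, abs_of_nonneg hα]
    _ ≤ α * (Real.sqrt (spectralNorm' KΨ * B) * ‖Q‖) := by gcongr
    _ = β * ‖Q₁ - Q₂‖ := by rw [hβ, hQ]; ring
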